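/- arXiv:2305.04640 — 2 statements merged into one kernel-verified Lean document; each statement's English description precedes it below -/
import Mathlib

section
/- Suppose an enclosure |f(𝕋^d)| ⊆ [a, b] with 0 ≤ a ≤ b holds for a trigonometric polynomial f on 𝕋^d. Then the modulus of f on the complex strip of width ρ satisfies |f(𝕋^d_ρ)| ⊆ [max(a − (‖f‖_{F,ρ} − ‖f‖_{F,0}), 0), b + ‖f‖_{F,ρ} − ‖f‖_{F,0}]. -/
open Finset

lemma abs_exp_sub_one_le' (t : ℝ) : |Real.exp t - 1| ≤ Real.exp |t| - 1 := by
  rw [abs_le]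
  constructor
  · have h1 := Real.add_one_le_exp t
    have h2 := Real.add_one_le_exp (|t|)
    have := abs_nonneg t
    nlinarith [neg_abs_le t]
  · have := Real.exp_le_exp.mpr (le_abs_self t)
    linarith

/-- Extending an enclosure of `|f|` on the real torus to the complex strip of width `ρ`
using the Fourier norms. -/
theorem stmt6 (d : ℕ) (ρ : ℝ) (hρ : 0 ≤ ρ) (I : Finset (Fin d → ℤ))
    (c : (Fin d → ℤ) → ℂ) (a b : ℝ) (ha : 0 ≤ a) (hab : a ≤ b)
    (henc : ∀ θ : Fin d → ℝ,
      ‖∑ k ∈ I, c k * Complex.exp (2 * Real.pi * Complex.I * ∑ ℓ, (k ℓ : ℂ) * (θ ℓ : ℂ))‖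
        ∈ Set.Icc a b) :
    ∀ θ y : Fin d → ℝ, (∀ ℓ, |y ℓ| ≤ ρ) →
      ‖∑ k ∈ I, c k * Complex.exp (2 * Real.pi * Complex.I *
          ∑ ℓ, (k ℓ : ℂ) * ((θ ℓ : ℂ) + Complex.I * (y ℓ : ℂ)))‖
        ∈ Set.Icc
            (max (a - ((∑ k ∈ I, ‖c k‖ * Real.exp (2 * Real.pi * (∑ ℓ, |(k ℓ : ℝ)|) * ρ))
                        - ∑ k ∈ I, ‖c k‖)) 0)
            (b + ((∑ k ∈ I, ‖c k‖ * Real.exp (2 * Real.pi * (∑ ℓ, |(k ℓ : ℝ)|) * ρ))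
                        - ∑ k ∈ I, ‖c k‖)) := by
  intro θ y hy
  set S1 : ℂ := ∑ k ∈ I, c k * Complex.exp (2 * Real.pi * Complex.I *
      ∑ ℓ, (k ℓ : ℂ) * (θ ℓ : ℂ)) with hS1
  set S2 : ℂ := ∑ k ∈ I, c k * Complex.exp (2 * Real.pi * Complex.I *
      ∑ ℓ, (k ℓ : ℂ) * ((θ ℓ : ℂ) + Complex.I * (y ℓ : ℂ))) with hS2
  set Δ : ℝ := (∑ k ∈ I, ‖c k‖ * Real.exp (2 * Real.pi * (∑ ℓ, |(k ℓ : ℝ)|) * ρ))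
      - ∑ k ∈ I, ‖c k‖ with hΔ
  have hdiff : ‖S2 - S1‖ ≤ Δ := by
    rw [hS2, hS1, hΔ, ← Finset.sum_sub_distrib, ← Finset.sum_sub_distrib]
    refine le_trans (norm_sum_le _ _) (Finset.sum_le_sum ?_)
    intro k hk
    set t : ℝ := -(2 * Real.pi * ∑ ℓ, (k ℓ : ℝ) * y ℓ) with ht
    have hsplit : (2 * Real.pi * Complex.I * ∑ ℓ, (k ℓ : ℂ) * ((θ ℓ : ℂ) + Complex.I * (y ℓ : ℂ)))
        = 2 * Real.pi * Complex.I * (∑ ℓ, (k ℓ : ℂ) * (θ ℓ : ℂ)) + (t : ℂ) := by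
      rw [ht]
      push_cast
      rw [Finset.mul_sum, Finset.mul_sum, Finset.mul_sum, ← Finset.sum_neg_distrib,
        ← Finset.sum_add_distrib]
      refine Finset.sum_congr rfl fun ℓ _ => ?_
      linear_combination (2 * (Real.pi:ℂ) * (k ℓ : ℂ) * (y ℓ : ℂ)) * Complex.I_sq
    rw [hsplit, Complex.exp_add]
    have h1 : ‖Complex.exp (2 * Real.pi * Complex.I * ∑ ℓ, (k ℓ : ℂ) * (θ ℓ : ℂ))‖ = 1 := by
      have : (2 * Real.pi * Complex.I * ∑ ℓ, (k ℓ : ℂ) * (θ ℓ : ℂ))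
          = ((2 * Real.pi * ∑ ℓ, (k ℓ : ℝ) * θ ℓ : ℝ) : ℂ) * Complex.I := by
        push_cast; ring
      rw [this, Complex.norm_exp_ofReal_mul_I]
    have hE : c k * (Complex.exp (2 * Real.pi * Complex.I * ∑ ℓ, (k ℓ : ℂ) * (θ ℓ : ℂ)) *
          Complex.exp (t : ℂ))
        - c k * Complex.exp (2 * Real.pi * Complex.I * ∑ ℓ, (k ℓ : ℂ) * (θ ℓ : ℂ))
        = c k * Complex.exp (2 * Real.pi * Complex.I * ∑ ℓ, (k ℓ : ℂ) * (θ ℓ : ℂ)) *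
          (Complex.exp (t : ℂ) - 1) := by ring
    rw [hE, norm_mul, norm_mul, h1, mul_one]
    have htabs : |t| ≤ 2 * Real.pi * (∑ ℓ, |(k ℓ : ℝ)|) * ρ := by
      have h2pi : |2 * Real.pi| = 2 * Real.pi := abs_of_nonneg (by positivity)
      have hp : (0:ℝ) ≤ 2 * Real.pi := by positivity
      rw [ht, abs_neg, abs_mul, h2pi]
      have hsum : |∑ ℓ, (k ℓ : ℝ) * y ℓ| ≤ (∑ ℓ, |(k ℓ : ℝ)|) * ρ :=
        calc |∑ ℓ, (k ℓ : ℝ) * y ℓ| ≤ ∑ ℓ, |(k ℓ : ℝ) * y ℓ| := Finset.abs_sum_le_sum_abs _ _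
        _ ≤ ∑ ℓ, |(k ℓ : ℝ)| * ρ := by
            refine Finset.sum_le_sum fun ℓ _ => ?_
            rw [abs_mul]
            exact mul_le_mul_of_nonneg_left (hy ℓ) (abs_nonneg _)
        _ = (∑ ℓ, |(k ℓ : ℝ)|) * ρ := by rw [Finset.sum_mul]
      nlinarith [hsum, hp, abs_nonneg (∑ ℓ, (k ℓ : ℝ) * y ℓ)]
    have hnorm : ‖Complex.exp (t : ℂ) - 1‖
        ≤ Real.exp (2 * Real.pi * (∑ ℓ, |(k ℓ : ℝ)|) * ρ) - 1 := by
      rw [← Complex.ofReal_exp, ← Complex.ofReal_one, ← Complex.ofReal_sub,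
        Complex.norm_real]
      calc |Real.exp t - 1| ≤ Real.exp |t| - 1 := abs_exp_sub_one_le' t
        _ ≤ Real.exp (2 * Real.pi * (∑ ℓ, |(k ℓ : ℝ)|) * ρ) - 1 := by
            have := Real.exp_le_exp.mpr htabs
            linarith
    calc ‖c k‖ * ‖Complex.exp (t : ℂ) - 1‖
        ≤ ‖c k‖ * (Real.exp (2 * Real.pi * (∑ ℓ, |(k ℓ : ℝ)|) * ρ) - 1) :=
          mul_le_mul_of_nonneg_left hnorm (norm_nonneg _)
      _ = ‖c k‖ * Real.exp (2 * Real.pi * (∑ ℓ, |(k ℓ : ℝ)|) * ρ) - ‖c k‖ := by ring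
  obtain ⟨h1a, h1b⟩ := henc θ
  have hub : ‖S2‖ ≤ b + Δ := by
    calc ‖S2‖ = ‖S1 + (S2 - S1)‖ := by ring_nf
      _ ≤ ‖S1‖ + ‖S2 - S1‖ := norm_add_le _ _
      _ ≤ b + Δ := add_le_add h1b hdiff
  have hlb : a - Δ ≤ ‖S2‖ := by
    have := norm_sub_norm_le S1 S2
    rw [norm_sub_rev] at hdiff
    linarith
  exact ⟨max_le (by linarith) (norm_nonneg _), hub⟩
end

section
/- If ω is Diophantine of type (γ, τ) with τ ≥ d, and ξ solves the cohomological equation ξ(θ) − ξ(θ+ω) = f(θ) termwise with ξ_k = f_k/(1 − e^{2πi k·ω}) (f_0 = 0), then for all 0 < δ the Fourier-norm bound ‖ξ‖_{F,ρ−δ} ≤ (γ^{-1} sup_{k≠0} |k|₁^τ e^{−2π|k|₁δ}/4) · ‖f‖_{F,ρ} holds; in particular ‖ξ‖_{F,ρ−δ} ≤ (τ/(2πe))^τ /(4γδ^τ) · ‖f‖_{F,ρ}. -/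
open Real

lemma calcA {x a t : ℝ} (hx : 0 < x) (ha : 0 < a) (ht : 0 < t) :
    x ^ t * Real.exp (-(a * x)) ≤ (t / (Real.exp 1 * a)) ^ t := by
  have he : (0:ℝ) < Real.exp 1 := Real.exp_pos 1
  have hlog : Real.log (a * x / t) ≤ a * x / t - 1 :=
    Real.log_le_sub_one_of_pos (by positivity)
  have hx' : x ^ t = Real.exp (t * Real.log x) := by
    rw [Real.rpow_def_of_pos hx, mul_comm]
  have hM : (t / (Real.exp 1 * a)) ^ t = Real.exp (t * Real.log (t / (Real.exp 1 * a))) := by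
    rw [Real.rpow_def_of_pos (by positivity), mul_comm]
  rw [hx', hM, ← Real.exp_add, Real.exp_le_exp]
  have hl2 : Real.log (a * x / t) = Real.log a + Real.log x - Real.log t := by
    rw [Real.log_div (by positivity) (by positivity), Real.log_mul ha.ne' hx.ne']
  have hl3 : Real.log (t / (Real.exp 1 * a)) = Real.log t - 1 - Real.log a := by
    rw [Real.log_div (by positivity) (by positivity), Real.log_mul he.ne' ha.ne',
      Real.log_exp]
    ring
  rw [hl2] at hlog
  have := mul_le_mul_of_nonneg_left hlog ht.le
  have htt : t * (a * x / t - 1) = a * x - t := by field_simp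
  rw [hl3]
  nlinarith

lemma sinlow (x : ℝ) : 4 * |x - round x| ≤ ‖(1 : ℂ) - Complex.exp (2 * Real.pi * Complex.I * x)‖ := by
  set y : ℝ := x - round x with hy
  have hy2 : |y| ≤ 1 / 2 := by
    rw [hy]
    exact abs_sub_round x
  -- norm equals 2 |sin (π x)|
  have key : (1 : ℂ) - Complex.exp (2 * Real.pi * Complex.I * x)
      = -Complex.exp (Real.pi * x * Complex.I) * (2 * Complex.I * Complex.sin (Real.pi * x)) := by
    rw [Complex.sin]
    have h2 : Complex.exp (Real.pi * x * Complex.I) * Complex.exp (-(Real.pi * x) * Complex.I) = 1 := by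
      rw [← Complex.exp_add]; ring_nf; exact Complex.exp_zero
    have h3 : Complex.exp (Real.pi * x * Complex.I) * Complex.exp (Real.pi * x * Complex.I)
        = Complex.exp (2 * Real.pi * Complex.I * x) := by
      rw [← Complex.exp_add]; ring_nf
    linear_combination -h2 + h3 + Complex.exp (Real.pi * x * Complex.I) *
      (Complex.exp (-(Real.pi * x : ℂ) * Complex.I) - Complex.exp ((Real.pi * x : ℂ) * Complex.I)) * Complex.I_sq
  have hnorm : ‖(1 : ℂ) - Complex.exp (2 * Real.pi * Complex.I * x)‖ = 2 * |Real.sin (Real.pi * x)| := by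
    rw [key]
    rw [norm_mul, norm_neg, ← Complex.ofReal_mul, Complex.norm_exp_ofReal_mul_I, one_mul,
      norm_mul, norm_mul, Complex.norm_I, mul_one,
      ← Complex.ofReal_sin, Complex.norm_real, Real.norm_eq_abs]
    norm_num
  rw [hnorm]
  -- |sin (π x)| = |sin (π y)|
  have hper : |Real.sin (Real.pi * x)| = |Real.sin (Real.pi * y)| := by
    have : Real.pi * y = Real.pi * x - (round x : ℝ) * Real.pi := by rw [hy]; ring
    rw [this, Real.sin_sub, Real.sin_int_mul_pi, mul_zero, sub_zero, abs_mul]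
    have hc : |Real.cos ((round x : ℝ) * Real.pi)| = 1 := by
      have hs := Real.sin_sq_add_cos_sq ((round x : ℝ) * Real.pi)
      rw [Real.sin_int_mul_pi] at hs
      nlinarith [abs_nonneg (Real.cos ((round x : ℝ) * Real.pi)), sq_abs (Real.cos ((round x : ℝ) * Real.pi))]
    rw [hc, mul_one]
  rw [hper]
  -- now Jordan
  have habs : |Real.sin (Real.pi * y)| = Real.sin (Real.pi * |y|) := by
    rcases abs_cases y with ⟨h1, h2⟩ | ⟨h1, h2⟩
    · rw [h1, abs_of_nonneg]
      exact Real.sin_nonneg_of_nonneg_of_le_pi (by positivity)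
        (by nlinarith [Real.pi_pos])
    · rw [h1, show Real.pi * -y = -(Real.pi * y) by ring, Real.sin_neg]
      exact abs_of_nonpos (Real.sin_nonpos_of_nonpos_of_neg_pi_le
        (by nlinarith [Real.pi_pos]) (by nlinarith [Real.pi_pos]))
  rw [habs]
  have := Real.mul_le_sin (x := Real.pi * |y|) (by positivity) (by nlinarith [Real.pi_pos])
  have hpi := Real.pi_pos
  rw [show 2 / Real.pi * (Real.pi * |y|) = 2 * |y| by field_simp] at this
  linarith
/-- Rüssmann estimate in the Fourier norm for the termwise solution of the
cohomological equation, together with the explicit `(τ/(2πe))^τ/(4γδ^τ)` bound. -/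
theorem stmt13 (d : ℕ) (hd : 0 < d) (γ τ ρ δ : ℝ) (hγ : 0 < γ) (hτ : (d : ℝ) ≤ τ)
    (hδ : 0 < δ) (hδρ : δ < ρ)
    (ω : Fin d → ℝ)
    (hdio : ∀ q : Fin d → ℤ, q ≠ 0 → ∀ p : ℤ,
      γ / (∑ ℓ, |(q ℓ : ℝ)|) ^ τ ≤ |(∑ ℓ, ω ℓ * q ℓ) - p|)
    (c : (Fin d → ℤ) → ℂ) (hc0 : c 0 = 0)
    (hsum : Summable fun k : Fin d → ℤ =>
      ‖c k‖ * Real.exp (2 * Real.pi * (∑ ℓ, |(k ℓ : ℝ)|) * ρ))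
    (ξ : (Fin d → ℤ) → ℂ) (hξ0 : ξ 0 = 0)
    (hξ : ∀ k : Fin d → ℤ, k ≠ 0 →
      ξ k = c k / (1 - Complex.exp (2 * Real.pi * Complex.I * (∑ ℓ, (k ℓ : ℝ) * ω ℓ)))) :
    (∑' k : Fin d → ℤ, ‖ξ k‖ * Real.exp (2 * Real.pi * (∑ ℓ, |(k ℓ : ℝ)|) * (ρ - δ)))
      ≤ (γ⁻¹ * (⨆ k : {k : Fin d → ℤ // k ≠ 0},
              (∑ ℓ, |((k : Fin d → ℤ) ℓ : ℝ)|) ^ τ *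
                Real.exp (-2 * Real.pi * (∑ ℓ, |((k : Fin d → ℤ) ℓ : ℝ)|) * δ)) / 4) *
          ∑' k : Fin d → ℤ, ‖c k‖ * Real.exp (2 * Real.pi * (∑ ℓ, |(k ℓ : ℝ)|) * ρ) ∧
    (∑' k : Fin d → ℤ, ‖ξ k‖ * Real.exp (2 * Real.pi * (∑ ℓ, |(k ℓ : ℝ)|) * (ρ - δ)))
      ≤ ((τ / (2 * Real.pi * Real.exp 1)) ^ τ / (4 * γ * δ ^ τ)) *
          ∑' k : Fin d → ℤ, ‖c k‖ * Real.exp (2 * Real.pi * (∑ ℓ, |(k ℓ : ℝ)|) * ρ) := by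
  have hpi := Real.pi_pos
  have hτ0 : (0:ℝ) < τ := lt_of_lt_of_le (by exact_mod_cast hd) hτ
  set K : (Fin d → ℤ) → ℝ := fun k => ∑ ℓ, |(k ℓ : ℝ)| with hKdef
  have hK1 : ∀ k : Fin d → ℤ, k ≠ 0 → 1 ≤ K k := by
    intro k hk
    obtain ⟨ℓ, hℓ⟩ : ∃ ℓ, k ℓ ≠ 0 := by
      by_contra h; push_neg at h; exact hk (funext h)
    calc (1:ℝ) ≤ |(k ℓ : ℝ)| := by
          rw [← Int.cast_abs]; exact_mod_cast Int.one_le_abs hℓ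
      _ ≤ K k := Finset.single_le_sum (f := fun i => |(k i : ℝ)|)
            (fun i _ => abs_nonneg _) (Finset.mem_univ ℓ)
  haveI : Nonempty {k : Fin d → ℤ // k ≠ 0} :=
    ⟨⟨fun _ => 1, by intro h; have := congrFun h ⟨0, hd⟩; simp at this⟩⟩
  set M : ℝ := (τ / (2 * Real.pi * Real.exp 1)) ^ τ / δ ^ τ with hMdef
  set T : {k : Fin d → ℤ // k ≠ 0} → ℝ := fun k =>
    K (k : Fin d → ℤ) ^ τ * Real.exp (-2 * Real.pi * K (k : Fin d → ℤ) * δ) with hTdef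
  have hT_le_M : ∀ k, T k ≤ M := by
    rintro ⟨k, hk⟩
    have hKpos : (0:ℝ) < K k := lt_of_lt_of_le one_pos (hK1 k hk)
    have hcalc := calcA (x := K k) (a := 2 * Real.pi * δ) (t := τ) hKpos (by positivity) hτ0
    have hbase : τ / (Real.exp 1 * (2 * Real.pi * δ)) = τ / (2 * Real.pi * Real.exp 1) / δ := by
      rw [div_div]; ring_nf
    have heq : (τ / (Real.exp 1 * (2 * Real.pi * δ))) ^ τ = M := by
      rw [hMdef, ← Real.div_rpow (by positivity) hδ.le, hbase]
    show K k ^ τ * Real.exp (-2 * Real.pi * K k * δ) ≤ M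
    rw [show (-2 * Real.pi * K k * δ) = -(2 * Real.pi * δ * K k) by ring, ← heq]
    exact hcalc
  have hbdd : BddAbove (Set.range T) := by
    refine ⟨M, ?_⟩
    rintro _ ⟨k, rfl⟩
    exact hT_le_M k
  set S : ℝ := ⨆ k : {k : Fin d → ℤ // k ≠ 0}, T k with hSdef
  have hS_le_M : S ≤ M := ciSup_le hT_le_M
  have hS_nonneg : 0 ≤ S := by
    obtain ⟨k⟩ := (inferInstance : Nonempty {k : Fin d → ℤ // k ≠ 0})
    have h1 : T k ≤ S := le_ciSup hbdd k
    have h2 : 0 ≤ T k := by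
      have : (0:ℝ) < K (k : Fin d → ℤ) := lt_of_lt_of_le one_pos (hK1 _ k.2)
      positivity
    linarith
  set C : ℝ := γ⁻¹ * S / 4 with hCdef
  have hC : 0 ≤ C := by positivity
  set F : (Fin d → ℤ) → ℝ := fun k => ‖c k‖ * Real.exp (2 * Real.pi * K k * ρ) with hFdef
  set G : (Fin d → ℤ) → ℝ := fun k => ‖ξ k‖ * Real.exp (2 * Real.pi * K k * (ρ - δ)) with hGdef
  have hpoint : ∀ k, G k ≤ C * F k := by
    intro k
    rcases eq_or_ne k 0 with rfl | hk
    · simp [hGdef, hFdef, hξ0, hc0]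
    · have hKpos : (0:ℝ) < K k := lt_of_lt_of_le one_pos (hK1 k hk)
      -- the real frequency
      set x : ℝ := ∑ ℓ, (k ℓ : ℝ) * ω ℓ with hxdef
      have hcast : (2 * Real.pi * Complex.I * (∑ ℓ, (k ℓ : ℝ) * ω ℓ) : ℂ)
          = 2 * Real.pi * Complex.I * (x : ℂ) := by
        rw [hxdef]
      have hdio' : γ / K k ^ τ ≤ |x - (round x : ℤ)| := by
        have h := hdio k hk (round x)
        have hsum_eq : (∑ ℓ, ω ℓ * k ℓ) = x := by
          rw [hxdef]; exact Finset.sum_congr rfl fun ℓ _ => mul_comm _ _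
        rwa [hsum_eq] at h
      have hden : 4 * (γ / K k ^ τ)
          ≤ ‖(1 : ℂ) - Complex.exp (2 * Real.pi * Complex.I * (∑ ℓ, (k ℓ : ℝ) * ω ℓ))‖ := by
        rw [hcast]
        calc 4 * (γ / K k ^ τ) ≤ 4 * |x - ((round x : ℤ) : ℝ)| := by linarith
          _ ≤ _ := sinlow x
      have hdenpos : (0:ℝ) < ‖(1 : ℂ) - Complex.exp (2 * Real.pi * Complex.I * (∑ ℓ, (k ℓ : ℝ) * ω ℓ))‖ := by
        have : (0:ℝ) < 4 * (γ / K k ^ τ) := by positivity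
        linarith
      have hxi : ‖ξ k‖ ≤ ‖c k‖ * K k ^ τ / (4 * γ) := by
        rw [hξ k hk, norm_div]
        rw [div_le_div_iff₀ hdenpos (by positivity)]
        have hKτ : (0:ℝ) < K k ^ τ := Real.rpow_pos_of_pos hKpos τ
        have h5 : ‖c k‖ * K k ^ τ * (4 * (γ / K k ^ τ))
            ≤ ‖c k‖ * K k ^ τ * ‖(1 : ℂ) - Complex.exp (2 * Real.pi * Complex.I *
                (∑ ℓ, (k ℓ : ℝ) * ω ℓ))‖ :=
          mul_le_mul_of_nonneg_left hden (by positivity)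
        have h6 : ‖c k‖ * K k ^ τ * (4 * (γ / K k ^ τ)) = ‖c k‖ * (4 * γ) := by
          field_simp
        linarith
      have hexp : Real.exp (2 * Real.pi * K k * (ρ - δ))
          = Real.exp (2 * Real.pi * K k * ρ) * Real.exp (-2 * Real.pi * K k * δ) := by
        rw [← Real.exp_add]; ring_nf
      have hterm : K k ^ τ * Real.exp (-2 * Real.pi * K k * δ) ≤ S :=
        le_ciSup hbdd (⟨k, hk⟩ : {k : Fin d → ℤ // k ≠ 0})
      calc G k = ‖ξ k‖ * Real.exp (2 * Real.pi * K k * (ρ - δ)) := rfl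
        _ ≤ (‖c k‖ * K k ^ τ / (4 * γ)) * Real.exp (2 * Real.pi * K k * (ρ - δ)) :=
            mul_le_mul_of_nonneg_right hxi (Real.exp_nonneg _)
        _ = γ⁻¹ * (K k ^ τ * Real.exp (-2 * Real.pi * K k * δ)) / 4 * F k := by
            rw [hexp, hFdef]
            field_simp
        _ ≤ C * F k := by
            rw [hCdef]
            have hFnn : 0 ≤ F k := by positivity
            gcongr
  have hsum2 : Summable (fun k => C * F k) := hsum.mul_left C
  have hGnn : ∀ k, 0 ≤ G k := fun k => by positivity
  have hGsum : Summable G := Summable.of_nonneg_of_le hGnn hpoint hsum2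
  have h1 : (∑' k, G k) ≤ ∑' k, C * F k := Summable.tsum_le_tsum hpoint hGsum hsum2
  rw [tsum_mul_left] at h1
  have hFtsum : 0 ≤ ∑' k, F k := tsum_nonneg fun k => by positivity
  constructor
  · exact h1
  · refine h1.trans ?_
    have hCM : C ≤ (τ / (2 * Real.pi * Real.exp 1)) ^ τ / (4 * γ * δ ^ τ) := by
      have key : ∀ A D : ℝ, 0 < D → γ⁻¹ * (A / D) / 4 = A / (4 * γ * D) := by
        intro A D hD
        ring
      have : γ⁻¹ * M / 4 = (τ / (2 * Real.pi * Real.exp 1)) ^ τ / (4 * γ * δ ^ τ) := by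
        rw [hMdef]; exact key _ _ (Real.rpow_pos_of_pos hδ τ)
      rw [hCdef, ← this]
      gcongr
    exact mul_le_mul_of_nonneg_right hCM hFtsum
end
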